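/- Let Ξ0 ∈ L(ℓ²(ℕ),X), Υ0 ∈ L(ℓ²(ℕ),U) and K ∈ L(X,U), and define G ∈ L(X, X×U) by Gx = (x, Kx) and H ∈ L(ℓ²(ℕ), X×U) by Hw = (Ξ0 w, Υ0 w). Suppose Ran(G∘Ξ0) is contained in the closure of Ran H. If dim(Ran Υ0) < ∞ and Υ0(Ker Ξ0) = Ran Υ0, then Ran(G∘Ξ0) ⊆ Ran H. In particular, if dim U = 1 and Ker Ξ0 is not contained in Ker Υ0, then Ran(G∘Ξ0) ⊆ Ran H. -/

import Mathlib

noncomputable section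

/-- `ℓ²(ℕ)`: the Hilbert space of square-summable complex sequences. -/
abbrev l2 : Type := lp (fun _ : ℕ => ℂ) 2

theorem stmt_6
    {X : Type} [NormedAddCommGroup X] [InnerProductSpace ℂ X] [CompleteSpace X] [Nontrivial X]
    {U : Type} [NormedAddCommGroup U] [InnerProductSpace ℂ U] [CompleteSpace U] [Nontrivial U]
    (Ξ0 : l2 →L[ℂ] X) (Υ0 : l2 →L[ℂ] U) (K : X →L[ℂ] U)
    (hclos : Set.range (fun w : l2 => ((Ξ0 w, K (Ξ0 w)) : X × U))
        ⊆ closure (Set.range (fun w : l2 => ((Ξ0 w, Υ0 w) : X × U)))) :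
    ((FiniteDimensional ℂ ↥(LinearMap.range (Υ0 : l2 →ₗ[ℂ] U)) ∧ Υ0 '' {w : l2 | Ξ0 w = 0} = Set.range Υ0) →
        Set.range (fun w : l2 => ((Ξ0 w, K (Ξ0 w)) : X × U))
          ⊆ Set.range (fun w : l2 => ((Ξ0 w, Υ0 w) : X × U))) ∧
    ((Module.finrank ℂ U = 1 ∧ ¬ (LinearMap.ker (Ξ0 : l2 →ₗ[ℂ] X) ≤ LinearMap.ker (Υ0 : l2 →ₗ[ℂ] U))) →
        Set.range (fun w : l2 => ((Ξ0 w, K (Ξ0 w)) : X × U))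
          ⊆ Set.range (fun w : l2 => ((Ξ0 w, Υ0 w) : X × U))) := by
  have main : (FiniteDimensional ℂ ↥(LinearMap.range (Υ0 : l2 →ₗ[ℂ] U)) ∧
        Υ0 '' {w : l2 | Ξ0 w = 0} = Set.range Υ0) →
      Set.range (fun w : l2 => ((Ξ0 w, K (Ξ0 w)) : X × U))
        ⊆ Set.range (fun w : l2 => ((Ξ0 w, Υ0 w) : X × U)) := by
    rintro ⟨hfd, himg⟩ y ⟨w, rfl⟩
    have hcl : IsClosed ((LinearMap.range (Υ0 : l2 →ₗ[ℂ] U) : Submodule ℂ U) : Set U) :=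
      Submodule.closed_of_finiteDimensional _
    have h1 : K (Ξ0 w) ∈ LinearMap.range (Υ0 : l2 →ₗ[ℂ] U) := by
      have hmem := hclos (Set.mem_range_self w)
      have h2 : ((Ξ0 w, K (Ξ0 w)) : X × U).2 ∈
          closure (Prod.snd '' (Set.range (fun w : l2 => ((Ξ0 w, Υ0 w) : X × U)))) :=
        image_closure_subset_closure_image continuous_snd ⟨_, hmem, rfl⟩
      have hsub : Prod.snd '' (Set.range (fun w : l2 => ((Ξ0 w, Υ0 w) : X × U)))
          ⊆ ((LinearMap.range (Υ0 : l2 →ₗ[ℂ] U) : Submodule ℂ U) : Set U) := by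
        rintro _ ⟨_, ⟨v, rfl⟩, rfl⟩; exact ⟨v, rfl⟩
      have h3 := closure_mono hsub h2
      rwa [hcl.closure_eq] at h3
    have h2 : K (Ξ0 w) - Υ0 w ∈ Set.range Υ0 := by
      rcases h1 with ⟨u, hu⟩
      exact ⟨u - w, by have hu' : Υ0 u = K (Ξ0 w) := hu; simp [map_sub, hu']⟩
    rw [← himg] at h2
    obtain ⟨v, hv0, hveq⟩ := h2
    refine ⟨w + v, ?_⟩
    have hv0' : Ξ0 v = 0 := hv0
    simp only [map_add, hv0', hveq, add_zero, Prod.mk.injEq]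
    exact ⟨by trivial, by abel⟩
  refine ⟨main, ?_⟩
  rintro ⟨hU, hker⟩
  haveI : FiniteDimensional ℂ U := FiniteDimensional.of_finrank_eq_succ hU
  refine main ⟨inferInstance, ?_⟩
  rw [SetLike.le_def] at hker
  push_neg at hker
  obtain ⟨v, hv0, hvne⟩ := hker
  have hv0' : Ξ0 v = 0 := hv0
  have hvne' : Υ0 v ≠ 0 := hvne
  set S : Submodule ℂ U := Submodule.map (Υ0 : l2 →ₗ[ℂ] U) (LinearMap.ker (Ξ0 : l2 →ₗ[ℂ] X)) with hS
  have hSne : S ≠ ⊥ := by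
    intro h
    have : Υ0 v ∈ S := ⟨v, hv0, rfl⟩
    rw [h, Submodule.mem_bot] at this
    exact hvne' this
  have hle : Module.finrank ℂ S ≤ 1 := hU ▸ Submodule.finrank_le S
  haveI : FiniteDimensional ℂ S := FiniteDimensional.finiteDimensional_submodule S
  have hne0 : Module.finrank ℂ S ≠ 0 := by
    intro h
    exact hSne (Submodule.finrank_eq_zero.mp h)
  have hStop : S = ⊤ := Submodule.eq_top_of_finrank_eq (by omega)
  have himg1 : Υ0 '' {w : l2 | Ξ0 w = 0} = (S : Set U) := by
    ext u
    simp [hS, Submodule.mem_map, LinearMap.mem_ker, Set.mem_image]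
  rw [himg1, hStop]
  have : Set.range Υ0 = Set.univ := by
    apply Set.eq_univ_of_univ_subset
    intro u _
    have : u ∈ S := hStop ▸ Submodule.mem_top
    obtain ⟨z, _, hz⟩ := this
    exact ⟨z, hz⟩
  simp [this]
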